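/- For every k ∈ ℕ and every n ≥ 1 there exist vectors x_1,…,x_n ∈ c00 such that, setting x = Σ_{i=1}^n x_i: (1) ‖x_i‖_k = 1/2 for i = 1,…,n; (2) ‖x‖_k ≤ 1; (3) ‖x‖_{k+1} ≥ n/4. -/

import Mathlib

/-- The ℓ¹-norm on `c00 = ℕ →₀ ℝ`. -/
noncomputable def l1 (x : ℕ →₀ ℝ) : ℝ := ∑ n ∈ x.support, |x n|

/-- `restr E x = Ex`, the restriction of `x` to the finite set `E`. -/
noncomputable def restr (E : Finset ℕ) (x : ℕ →₀ ℝ) : ℕ →₀ ℝ :=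
  x.filter (fun n => n ∈ E)

/-- `Admissible n Es` says that `E_1, …, E_n` are finite nonempty subsets of ℕ
with `n ≤ E_1 < E_2 < ⋯ < E_n`. -/
def Admissible (n : ℕ) (Es : Fin n → Finset ℕ) : Prop :=
  0 < n ∧ (∀ i, (Es i).Nonempty) ∧
    (∀ i : Fin n, ∀ a ∈ Es i, n ≤ a) ∧
    (∀ i j : Fin n, i < j → ∀ a ∈ Es i, ∀ b ∈ Es j, a < b)

/-- The Tsirelson iterate norms `‖·‖_k`. -/
noncomputable def tsir : ℕ → (ℕ →₀ ℝ) → ℝ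
  | 0, x => ⨆ n, |x n|
  | (k + 1), x => max (tsir k x)
      (sSup { r : ℝ | ∃ n : ℕ, ∃ Es : Fin n → Finset ℕ, Admissible n Es ∧
        r = (1 / 2) * ∑ i, tsir k (restr (Es i) x) })


lemma restr_apply (E : Finset ℕ) (x : ℕ →₀ ℝ) (p : ℕ) :
    restr E x p = if p ∈ E then x p else 0 := Finsupp.filter_apply _ _ _

lemma l1_nonneg (x : ℕ →₀ ℝ) : 0 ≤ l1 x :=
  Finset.sum_nonneg fun _ _ => abs_nonneg _

lemma abs_apply_le_l1 (x : ℕ →₀ ℝ) (p : ℕ) : |x p| ≤ l1 x := by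
  by_cases h : p ∈ x.support
  · exact Finset.single_le_sum (f := fun p => |x p|) (fun _ _ => abs_nonneg _) h
  · simp only [Finsupp.notMem_support_iff] at h
    simp [h, l1_nonneg]

lemma support_restr (E : Finset ℕ) (x : ℕ →₀ ℝ) :
    (restr E x).support = x.support.filter (· ∈ E) := Finsupp.support_filter _ _

lemma l1_restr_le (E : Finset ℕ) (x : ℕ →₀ ℝ) : l1 (restr E x) ≤ l1 x := by
  unfold l1
  rw [support_restr]
  calc ∑ p ∈ x.support.filter (· ∈ E), |restr E x p|
      = ∑ p ∈ x.support.filter (· ∈ E), |x p| := by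
        apply Finset.sum_congr rfl
        intro p hp
        rw [Finset.mem_filter] at hp
        rw [restr_apply, if_pos hp.2]
    _ ≤ ∑ p ∈ x.support, |x p| :=
        Finset.sum_le_sum_of_subset_of_nonneg (Finset.filter_subset _ _)
          (fun _ _ _ => abs_nonneg _)

lemma admissible_disjoint {m : ℕ} {Es : Fin m → Finset ℕ} (h : Admissible m Es)
    {i j : Fin m} (hij : i ≠ j) : Disjoint (Es i) (Es j) := by
  rcases lt_or_gt_of_ne hij with hlt | hlt
  · rw [Finset.disjoint_left]
    intro a ha ha'
    exact lt_irrefl a (h.2.2.2 i j hlt a ha a ha')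
  · rw [Finset.disjoint_left]
    intro a ha ha'
    exact lt_irrefl a (h.2.2.2 j i hlt a ha' a ha)

lemma l1_sum_restr_le {m : ℕ} (Es : Fin m → Finset ℕ)
    (hdisj : ∀ i j : Fin m, i ≠ j → Disjoint (Es i) (Es j)) (x : ℕ →₀ ℝ) :
    ∑ i, l1 (restr (Es i) x) ≤ l1 x := by
  have hrw : ∀ i : Fin m, l1 (restr (Es i) x) = ∑ p ∈ x.support.filter (· ∈ Es i), |x p| := by
    intro i
    unfold l1
    rw [support_restr]
    apply Finset.sum_congr rfl
    intro p hp
    rw [Finset.mem_filter] at hp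
    rw [restr_apply, if_pos hp.2]
  simp only [hrw]
  rw [← Finset.sum_biUnion]
  · exact Finset.sum_le_sum_of_subset_of_nonneg
      (Finset.biUnion_subset.2 fun i _ => Finset.filter_subset _ _)
      (fun _ _ _ => abs_nonneg _)
  · intro i _ j _ hij
    simp only [Function.onFun]
    rw [Finset.disjoint_left]
    intro a ha ha'
    rw [Finset.mem_filter] at ha ha'
    exact Finset.disjoint_left.1 (hdisj i j hij) ha.2 ha'.2

lemma tsir_nonneg (k : ℕ) (x : ℕ →₀ ℝ) : 0 ≤ tsir k x := by
  induction k generalizing x with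
  | zero => exact Real.iSup_nonneg fun n => abs_nonneg _
  | succ k ih => exact le_trans (ih x) (le_max_left _ _)

lemma tsir_le_l1 (k : ℕ) (x : ℕ →₀ ℝ) : tsir k x ≤ l1 x := by
  induction k generalizing x with
  | zero => exact Real.iSup_le (abs_apply_le_l1 x) (l1_nonneg x)
  | succ k ih =>
    apply max_le (ih x)
    apply Real.sSup_le _ (l1_nonneg x)
    rintro r ⟨m, Es, hadm, rfl⟩
    have h1 : ∑ i, tsir k (restr (Es i) x) ≤ ∑ i, l1 (restr (Es i) x) :=
      Finset.sum_le_sum fun i _ => ih _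
    have h2 := l1_sum_restr_le Es (fun i j hij => admissible_disjoint hadm hij) x
    nlinarith [l1_nonneg x]

lemma splitting_mem_le (k : ℕ) (x : ℕ →₀ ℝ) {r : ℝ}
    (hr : r ∈ { r : ℝ | ∃ n : ℕ, ∃ Es : Fin n → Finset ℕ, Admissible n Es ∧
        r = (1 / 2) * ∑ i, tsir k (restr (Es i) x) }) : r ≤ l1 x := by
  obtain ⟨m, Es, hadm, rfl⟩ := hr
  have h1 : ∑ i, tsir k (restr (Es i) x) ≤ ∑ i, l1 (restr (Es i) x) :=
    Finset.sum_le_sum fun i _ => tsir_le_l1 _ _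
  have h2 := l1_sum_restr_le Es (fun i j hij => admissible_disjoint hadm hij) x
  nlinarith [l1_nonneg x]

lemma tsir_succ_ge {k m : ℕ} {Es : Fin m → Finset ℕ} (hadm : Admissible m Es) (x : ℕ →₀ ℝ) :
    (1 / 2) * ∑ i, tsir k (restr (Es i) x) ≤ tsir (k + 1) x := by
  refine le_trans (le_csSup ⟨l1 x, fun r hr => splitting_mem_le k x hr⟩
    ⟨m, Es, hadm, rfl⟩) (le_max_right _ _)

lemma bdd_abs (x : ℕ →₀ ℝ) : BddAbove (Set.range fun p => |x p|) :=
  ⟨l1 x, by rintro r ⟨p, rfl⟩; exact abs_apply_le_l1 x p⟩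

lemma abs_le_tsir0 (x : ℕ →₀ ℝ) (p : ℕ) : |x p| ≤ tsir 0 x :=
  le_ciSup (bdd_abs x) p

lemma restr_restr (E F : Finset ℕ) (x : ℕ →₀ ℝ) :
    restr E (restr F x) = restr F (restr E x) := by
  ext p
  simp only [restr_apply]
  by_cases hE : p ∈ E <;> by_cases hF : p ∈ F <;> simp [hE, hF]

lemma restr_add (E : Finset ℕ) (x y : ℕ →₀ ℝ) :
    restr E (x + y) = restr E x + restr E y := by
  ext p
  simp only [Finsupp.add_apply, restr_apply]
  by_cases hE : p ∈ E <;> simp [hE]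

lemma restr_smul (E : Finset ℕ) (c : ℝ) (x : ℕ →₀ ℝ) :
    restr E (c • x) = c • restr E x := by
  ext p
  simp only [Finsupp.smul_apply, restr_apply, smul_eq_mul]
  by_cases hE : p ∈ E <;> simp [hE]

lemma restr_zero (E : Finset ℕ) : restr E (0 : ℕ →₀ ℝ) = 0 := by
  ext p; simp [restr_apply]

lemma restr_sum {ι : Type*} (E : Finset ℕ) (s : Finset ι) (x : ι → ℕ →₀ ℝ) :
    restr E (∑ i ∈ s, x i) = ∑ i ∈ s, restr E (x i) := by
  classical
  induction s using Finset.cons_induction with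
  | empty => simp [restr_zero]
  | cons i s his ih => rw [Finset.sum_cons, restr_add, ih, Finset.sum_cons]

lemma tsir_restr_le (k : ℕ) (E : Finset ℕ) (x : ℕ →₀ ℝ) :
    tsir k (restr E x) ≤ tsir k x := by
  induction k generalizing E x with
  | zero =>
    apply Real.iSup_le _ (tsir_nonneg 0 x)
    intro p
    rw [restr_apply]
    by_cases hE : p ∈ E
    · rw [if_pos hE]; exact abs_le_tsir0 x p
    · rw [if_neg hE]; simpa using tsir_nonneg 0 x
  | succ k ih =>
    apply max_le (le_trans (ih E x) (le_max_left _ _))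
    apply Real.sSup_le _ (tsir_nonneg (k+1) x)
    rintro r ⟨m, Es, hadm, rfl⟩
    have h1 : ∀ i : Fin m, tsir k (restr (Es i) (restr E x)) ≤ tsir k (restr (Es i) x) := by
      intro i
      rw [restr_restr]
      exact ih E (restr (Es i) x)
    calc (1/2) * ∑ i, tsir k (restr (Es i) (restr E x))
        ≤ (1/2) * ∑ i, tsir k (restr (Es i) x) := by
          apply mul_le_mul_of_nonneg_left (Finset.sum_le_sum fun i _ => h1 i) (by norm_num)
      _ ≤ tsir (k+1) x := tsir_succ_ge hadm x

lemma tsir_add_le (k : ℕ) (x y : ℕ →₀ ℝ) : tsir k (x + y) ≤ tsir k x + tsir k y := by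
  induction k generalizing x y with
  | zero =>
    apply Real.iSup_le _ (add_nonneg (tsir_nonneg 0 x) (tsir_nonneg 0 y))
    intro p
    calc |(x + y) p| ≤ |x p| + |y p| := by rw [Finsupp.add_apply]; exact abs_add_le _ _
      _ ≤ tsir 0 x + tsir 0 y := add_le_add (abs_le_tsir0 x p) (abs_le_tsir0 y p)
  | succ k ih =>
    apply max_le
    · exact le_trans (ih x y) (add_le_add (le_max_left _ _) (le_max_left _ _))
    apply Real.sSup_le _ (add_nonneg (tsir_nonneg (k+1) x) (tsir_nonneg (k+1) y))
    rintro r ⟨m, Es, hadm, rfl⟩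
    have h1 : ∀ i : Fin m, tsir k (restr (Es i) (x + y))
        ≤ tsir k (restr (Es i) x) + tsir k (restr (Es i) y) := by
      intro i
      rw [restr_add]
      exact ih _ _
    calc (1/2) * ∑ i, tsir k (restr (Es i) (x+y))
        ≤ (1/2) * ∑ i, (tsir k (restr (Es i) x) + tsir k (restr (Es i) y)) := by
          apply mul_le_mul_of_nonneg_left (Finset.sum_le_sum fun i _ => h1 i) (by norm_num)
      _ = (1/2) * ∑ i, tsir k (restr (Es i) x) + (1/2) * ∑ i, tsir k (restr (Es i) y) := by
          rw [Finset.sum_add_distrib]; ring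
      _ ≤ tsir (k+1) x + tsir (k+1) y := add_le_add (tsir_succ_ge hadm x) (tsir_succ_ge hadm y)

lemma tsir_zero (k : ℕ) : tsir k (0 : ℕ →₀ ℝ) = 0 := by
  refine le_antisymm ?_ (tsir_nonneg k 0)
  have := tsir_le_l1 k (0 : ℕ →₀ ℝ)
  simpa [l1] using this

lemma tsir_sum_le {ι : Type*} (k : ℕ) (s : Finset ι) (x : ι → ℕ →₀ ℝ) :
    tsir k (∑ i ∈ s, x i) ≤ ∑ i ∈ s, tsir k (x i) := by
  classical
  induction s using Finset.cons_induction with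
  | empty => simp [tsir_zero]
  | cons i s his ih =>
    rw [Finset.sum_cons, Finset.sum_cons]
    exact le_trans (tsir_add_le k _ _) (add_le_add le_rfl ih)

lemma tsir_smul_le (k : ℕ) {c : ℝ} (hc : 0 ≤ c) (x : ℕ →₀ ℝ) :
    tsir k (c • x) ≤ c * tsir k x := by
  induction k generalizing x with
  | zero =>
    apply Real.iSup_le _ (mul_nonneg hc (tsir_nonneg 0 x))
    intro p
    rw [Finsupp.smul_apply, smul_eq_mul, abs_mul, abs_of_nonneg hc]
    exact mul_le_mul_of_nonneg_left (abs_le_tsir0 x p) hc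
  | succ k ih =>
    apply max_le
    · exact le_trans (ih x) (mul_le_mul_of_nonneg_left (le_max_left _ _) hc)
    apply Real.sSup_le _ (mul_nonneg hc (tsir_nonneg (k+1) x))
    rintro r ⟨m, Es, hadm, rfl⟩
    have h1 : ∀ i : Fin m, tsir k (restr (Es i) (c • x)) ≤ c * tsir k (restr (Es i) x) := by
      intro i
      rw [restr_smul]
      exact ih _
    calc (1/2) * ∑ i, tsir k (restr (Es i) (c • x))
        ≤ (1/2) * ∑ i, c * tsir k (restr (Es i) x) := by
          apply mul_le_mul_of_nonneg_left (Finset.sum_le_sum fun i _ => h1 i) (by norm_num)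
      _ = c * ((1/2) * ∑ i, tsir k (restr (Es i) x)) := by
          rw [← Finset.mul_sum]; ring
      _ ≤ c * tsir (k+1) x := mul_le_mul_of_nonneg_left (tsir_succ_ge hadm x) hc

lemma tsir_smul (k : ℕ) {c : ℝ} (hc : 0 < c) (x : ℕ →₀ ℝ) :
    tsir k (c • x) = c * tsir k x := by
  refine le_antisymm (tsir_smul_le k hc.le x) ?_
  have h := tsir_smul_le k (c := c⁻¹) (by positivity) (c • x)
  rw [inv_smul_smul₀ hc.ne' x] at h
  calc c * tsir k x ≤ c * (c⁻¹ * tsir k (c • x)) := mul_le_mul_of_nonneg_left h hc.le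
    _ = tsir k (c • x) := by field_simp

lemma restr_eq_self {E : Finset ℕ} {x : ℕ →₀ ℝ} (h : x.support ⊆ E) : restr E x = x := by
  ext p
  rw [restr_apply]
  by_cases hp : p ∈ E
  · rw [if_pos hp]
  · rw [if_neg hp]
    by_contra hne
    exact hp (h (Finsupp.mem_support_iff.2 fun h0 => hne h0.symm))

lemma restr_eq_zero {E : Finset ℕ} {x : ℕ →₀ ℝ} (h : Disjoint E x.support) :
    restr E x = 0 := by
  ext p
  rw [restr_apply]
  by_cases hp : p ∈ E
  · rw [if_pos hp]
    by_contra hne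
    exact (Finset.disjoint_left.1 h hp) (Finsupp.mem_support_iff.2 fun h0 => hne (by simp [h0]))
  · simp [hp]

lemma restr_supp_sum {n : ℕ} (x : Fin n → ℕ →₀ ℝ)
    (hdisj : ∀ i j : Fin n, i ≠ j → Disjoint (x i).support (x j).support) (j : Fin n) :
    restr ((x j).support) (∑ i, x i) = x j := by
  rw [restr_sum]
  rw [Finset.sum_eq_single j]
  · exact restr_eq_self (le_refl _)
  · intro i _ hij
    exact restr_eq_zero (Disjoint.symm (hdisj i j hij))
  · intro h
    exact absurd (Finset.mem_univ j) h

lemma blocks_lower {k n : ℕ} (hn : 0 < n) (x : Fin n → ℕ →₀ ℝ)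
    (hne : ∀ i, (x i).support.Nonempty)
    (hpos : ∀ i : Fin n, ∀ p ∈ (x i).support, n ≤ p)
    (hord : ∀ i j : Fin n, i < j → ∀ p ∈ (x i).support, ∀ q ∈ (x j).support, p < q)
    (hval : ∀ i, tsir k (x i) = 1 / 2) :
    (n : ℝ) / 4 ≤ tsir (k + 1) (∑ i, x i) := by
  have hdisj : ∀ i j : Fin n, i ≠ j → Disjoint (x i).support (x j).support := by
    intro i j hij
    rcases lt_or_gt_of_ne hij with h | h
    · rw [Finset.disjoint_left]
      intro a ha ha'
      exact lt_irrefl a (hord i j h a ha a ha')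
    · rw [Finset.disjoint_left]
      intro a ha ha'
      exact lt_irrefl a (hord j i h a ha' a ha)
  have hadm : Admissible n (fun i => (x i).support) :=
    ⟨hn, hne, hpos, fun i j hij p hp q hq => hord i j hij p hp q hq⟩
  have h := tsir_succ_ge (k := k) hadm (∑ i, x i)
  have heq : ∀ i : Fin n, tsir k (restr ((x i).support) (∑ i, x i)) = 1/2 := by
    intro i
    rw [restr_supp_sum x hdisj i, hval i]
  rw [Finset.sum_congr rfl (fun i _ => heq i)] at h
  simp only [Finset.sum_const, Finset.card_univ, Fintype.card_fin, nsmul_eq_mul] at h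
  calc (n:ℝ)/4 = (1/2) * (n * (1/2)) := by ring
    _ ≤ tsir (k+1) (∑ i, x i) := h

lemma tsir0_single (p : ℕ) {c : ℝ} (hc : 0 ≤ c) :
    tsir 0 (Finsupp.single p c) = c := by
  refine le_antisymm ?_ ?_
  · apply Real.iSup_le _ hc
    intro q
    rw [Finsupp.single_apply]
    by_cases h : p = q <;> simp [h, hc, abs_of_nonneg hc]
  · have := abs_le_tsir0 (Finsupp.single p c) p
    rwa [Finsupp.single_apply, if_pos rfl, abs_of_nonneg hc] at this

lemma main_statement (k : ℕ) : ∀ n : ℕ, 1 ≤ n → ∀ s : ℕ,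
    ∃ (x : Fin n → (ℕ →₀ ℝ)) (lo hi : Fin n → ℕ),
    (∀ i, tsir k (x i) = 1 / 2) ∧
    (∀ i, (x i).support.Nonempty) ∧
    (∀ i : Fin n, ∀ p ∈ (x i).support, lo i ≤ p ∧ p ≤ hi i) ∧
    (∀ i, n ≤ lo i ∧ s ≤ lo i) ∧
    (∀ i j : Fin n, i < j → hi i < lo j) ∧
    tsir k (∑ i, x i) ≤ 1 ∧
    (n : ℝ) / 4 ≤ tsir (k + 1) (∑ i, x i) := by
  induction k with
  | zero =>
    intro n hn s
    set p : Fin n → ℕ := fun i => max n s + 1 + i with hp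
    have hpinj : Function.Injective p := by
      intro i j hij
      simp only [hp] at hij
      have : (i:ℕ) = (j:ℕ) := by omega
      exact Fin.ext this
    have hsupp : ∀ i : Fin n, ((Finsupp.single (p i) (1/2 : ℝ))).support = {p i} :=
      fun i => Finsupp.support_single_ne_zero _ (by norm_num)
    refine ⟨fun i => Finsupp.single (p i) (1/2 : ℝ), p, p, ?_, ?_, ?_, ?_, ?_, ?_, ?_⟩
    · exact fun i => tsir0_single (p i) (by norm_num)
    · intro i; rw [hsupp i]; exact ⟨p i, Finset.mem_singleton_self _⟩
    · intro i q hq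
      rw [hsupp i, Finset.mem_singleton] at hq
      omega
    · intro i; constructor <;> simp [hp] <;> omega
    · intro i j hij
      simp only [hp]
      have : (i:ℕ) < (j:ℕ) := hij
      omega
    · -- tsir 0 of the sum ≤ 1
      apply Real.iSup_le _ (by norm_num)
      intro q
      have hYq : (∑ i : Fin n, Finsupp.single (p i) (1/2 : ℝ)) q
          = ∑ i : Fin n, (Finsupp.single (p i) (1/2 : ℝ)) q :=
        Finsupp.finset_sum_apply _ _ _
      rw [hYq]
      have habs : |∑ i : Fin n, (Finsupp.single (p i) (1/2 : ℝ)) q| ≤ 1/2 := by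
        by_cases h : ∃ i, p i = q
        · obtain ⟨i0, hi0⟩ := h
          rw [Finset.sum_eq_single i0]
          · rw [Finsupp.single_apply, if_pos hi0,
              abs_of_nonneg (by norm_num : (0:ℝ) ≤ 1/2)]
          · intro b _ hb
            rw [Finsupp.single_apply, if_neg]
            intro hbq
            exact hb (hpinj (hbq.trans hi0.symm))
          · intro habs; exact absurd (Finset.mem_univ i0) habs
        · push_neg at h
          rw [Finset.sum_eq_zero]
          · norm_num
          · intro b _
            rw [Finsupp.single_apply, if_neg (h b)]
      calc |∑ i : Fin n, (Finsupp.single (p i) (1/2 : ℝ)) q| ≤ 1/2 := habs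
        _ ≤ 1 := by norm_num
    · apply blocks_lower hn
      · intro i; rw [hsupp i]; exact ⟨p i, Finset.mem_singleton_self _⟩
      · intro i q hq
        rw [hsupp i, Finset.mem_singleton] at hq
        simp only [hp] at hq
        omega
      · intro i j hij q hq r hr
        rw [hsupp i, Finset.mem_singleton] at hq
        rw [hsupp j, Finset.mem_singleton] at hr
        subst hq; subst hr
        simp only [hp]
        have : (i:ℕ) < (j:ℕ) := hij
        omega
      · exact fun i => tsir0_single (p i) (by norm_num)
  | succ k ih =>
    intro n hn s
    classical
    have npos : 0 < n := hn
    -- Packaged corollary of the induction hypothesis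
    have hQ : ∀ N s' : ℕ, 1 ≤ N → ∃ Zab : (ℕ →₀ ℝ) × ℕ × ℕ,
        (s' ≤ Zab.2.1) ∧ (∀ p ∈ Zab.1.support, Zab.2.1 ≤ p ∧ p ≤ Zab.2.2) ∧
        Zab.1.support.Nonempty ∧ tsir k Zab.1 ≤ 1 ∧ (N : ℝ)/4 ≤ tsir (k+1) Zab.1 := by
      intro N s' hN
      obtain ⟨x, lo, hi, hval, hne, hbounds, hstart, hord, hupper, hlower⟩ := ih N hN s'
      have hNpos : 0 < N := hN
      have hlh : ∀ i : Fin N, lo i ≤ hi i := by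
        intro i
        obtain ⟨q, hq⟩ := hne i
        obtain ⟨h1, h2⟩ := hbounds i q hq
        omega
      have hsub : ∀ p ∈ (∑ i, x i).support, ∃ i, p ∈ (x i).support := by
        intro p hp
        by_contra hc
        push_neg at hc
        rw [Finsupp.mem_support_iff] at hp
        apply hp
        rw [Finsupp.finset_sum_apply]
        refine Finset.sum_eq_zero fun i _ => ?_
        have := hc i
        rwa [Finsupp.notMem_support_iff] at this
      have hNm1 : N - 1 < N := by omega
      set i0 : Fin N := ⟨0, hNpos⟩ with hi0def
      set iN : Fin N := ⟨N-1, hNm1⟩ with hiNdef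
      refine ⟨⟨∑ i, x i, lo i0, hi iN⟩, (hstart _).2, ?_, ?_, hupper, hlower⟩
      · intro p hp
        obtain ⟨i, hi'⟩ := hsub p hp
        obtain ⟨hp1, hp2⟩ := hbounds i p hi'
        constructor
        · show lo i0 ≤ p
          by_cases h0 : i0 < i
          · have h01 := hord _ _ h0
            have h02 := hlh i0
            exact le_trans (le_trans h02 h01.le) hp1
          · have : i = i0 := by
              apply le_antisymm (not_lt.1 h0)
              exact Fin.mk_le_of_le_val (Nat.zero_le _)
            rw [this] at hp1
            exact hp1
        · show p ≤ hi iN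
          by_cases hl : i < iN
          · have h01 := hord _ _ hl
            have h02 := hlh iN
            exact le_trans hp2 (le_trans h01.le h02)
          · have : i = iN := by
              apply le_antisymm _ (not_lt.1 hl)
              have hilt := i.isLt
              have : (i:ℕ) ≤ N-1 := by omega
              exact Fin.le_def.2 this
            rw [this] at hp2
            exact hp2
      · show (∑ i, x i).support.Nonempty
        rw [Finsupp.support_nonempty_iff]
        intro h0
        rw [h0, tsir_zero] at hlower
        have : (1:ℝ) ≤ (N:ℝ) := by exact_mod_cast hN
        linarith
    choose! pick h1 h2 h3 h4 h5 using hQ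
    -- recursively chosen blocks
    obtain ⟨f, hf0, hfs⟩ : ∃ f : ℕ → (ℕ →₀ ℝ) × ℕ × ℕ,
        f 0 = pick (4*n) (max n s) ∧
        ∀ j, f (j+1) = pick (4*n*((f j).2.2+1)) ((f j).2.2+1) :=
      ⟨Nat.rec (pick (4*n) (max n s)) (fun _ prev => pick (4*n*(prev.2.2+1)) (prev.2.2+1)),
        rfl, fun j => rfl⟩
    obtain ⟨Nf, hN0, hNs⟩ : ∃ Nf : ℕ → ℕ, Nf 0 = 4*n ∧
        ∀ j, Nf (j+1) = 4*n*((f j).2.2+1) :=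
      ⟨fun j => match j with | 0 => 4*n | (j+1) => 4*n*((f j).2.2+1), rfl, fun j => rfl⟩
    have h4n : ∀ j, 4*n ≤ Nf j := by
      intro j
      cases j with
      | zero => rw [hN0]
      | succ j =>
        rw [hNs]
        calc 4*n = 4*n*1 := by ring
          _ ≤ 4*n*((f j).2.2+1) := Nat.mul_le_mul_left _ (by omega)
    have hN1 : ∀ j, 1 ≤ Nf j := fun j => le_trans (by omega) (h4n j)
    -- per-block specs
    have hfspec : ∀ j, (∀ p ∈ (f j).1.support, (f j).2.1 ≤ p ∧ p ≤ (f j).2.2) ∧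
        (f j).1.support.Nonempty ∧ tsir k (f j).1 ≤ 1 ∧
        ((Nf j : ℝ))/4 ≤ tsir (k+1) (f j).1 := by
      intro j
      cases j with
      | zero =>
        have h14 : 1 ≤ 4*n := by omega
        rw [hf0, hN0]
        exact ⟨h2 _ _ h14, h3 _ _ h14, h4 _ _ h14, h5 _ _ h14⟩
      | succ j =>
        have h14 : 1 ≤ 4*n*((f j).2.2+1) :=
          Nat.mul_pos (show 0 < 4*n by omega) (Nat.succ_pos ((f j).2.2))
        rw [hfs j, hNs j]
        exact ⟨h2 _ _ h14, h3 _ _ h14, h4 _ _ h14, h5 _ _ h14⟩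
    have hs0 : max n s ≤ (f 0).2.1 := by
      have h14 : 1 ≤ 4*n := by omega
      rw [hf0]; exact h1 _ _ h14
    have hsS : ∀ j, (f j).2.2 + 1 ≤ (f (j+1)).2.1 := by
      intro j
      have h14 : 1 ≤ 4*n*((f j).2.2+1) :=
        Nat.mul_pos (show 0 < 4*n by omega) (Nat.succ_pos ((f j).2.2))
      rw [hfs j]; exact h1 _ _ h14
    have hab : ∀ j, (f j).2.1 ≤ (f j).2.2 := by
      intro j
      obtain ⟨q, hq⟩ := (hfspec j).2.1
      obtain ⟨u, v⟩ := (hfspec j).1 q hq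
      omega
    have hchain : ∀ i j, i < j → (f i).2.2 < (f j).2.1 := by
      intro i j hij
      induction j with
      | zero => omega
      | succ j ihj =>
        rcases Nat.lt_succ_iff_lt_or_eq.1 hij with h | h
        · have c1 := ihj h
          have c2 := hab j
          have c3 := hsS j
          omega
        · subst h
          exact hsS i
    have hge : ∀ j, max n s ≤ (f j).2.1 := by
      intro j
      induction j with
      | zero => exact hs0
      | succ j ihj =>
        have c2 := hab j
        have c3 := hsS j
        omega
    have htpos : ∀ j, (0:ℝ) < tsir (k+1) (f j).1 := by
      intro j
      have hl := (hfspec j).2.2.2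
      have hcast : (1:ℝ) ≤ (Nf j : ℝ) := by exact_mod_cast hN1 j
      linarith
    have hNfpos : ∀ j, (0:ℝ) < (Nf j : ℝ) := by
      intro j
      exact_mod_cast hN1 j
    have hlampos : ∀ j, (0:ℝ) < 1/(2 * tsir (k+1) (f j).1) := by
      intro j
      have := htpos j
      positivity
    have hlamle : ∀ j, 1/(2 * tsir (k+1) (f j).1) ≤ 2/(Nf j : ℝ) := by
      intro j
      have hl := (hfspec j).2.2.2
      rw [div_le_div_iff₀ (by have := htpos j; linarith) (hNfpos j)]
      nlinarith [htpos j]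
    have hnR : (0:ℝ) < (n:ℝ) := by exact_mod_cast npos
    have hlamle' : ∀ j, 1/(2 * tsir (k+1) (f j).1) ≤ 1/(2*(n:ℝ)) := by
      intro j
      refine le_trans (hlamle j) ?_
      have h4cast : (4:ℝ)*(n:ℝ) ≤ (Nf j : ℝ) := by exact_mod_cast h4n j
      rw [div_le_div_iff₀ (hNfpos j) (by linarith)]
      nlinarith
    -- the blocks
    set x' : Fin n → (ℕ →₀ ℝ) :=
      fun i => (1/(2 * tsir (k+1) (f (i:ℕ)).1)) • (f (i:ℕ)).1 with hx'def
    have hxsupp : ∀ i : Fin n, (x' i).support = (f (i:ℕ)).1.support :=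
      fun i => Finsupp.support_smul_eq (ne_of_gt (hlampos (i:ℕ)))
    have hxval : ∀ i : Fin n, tsir (k+1) (x' i) = 1/2 := by
      intro i
      rw [hx'def]
      rw [tsir_smul _ (hlampos (i:ℕ))]
      have := (htpos (i:ℕ)).ne'
      field_simp
    have hxk : ∀ i : Fin n, tsir k (x' i) ≤ 1/(2 * tsir (k+1) (f (i:ℕ)).1) := by
      intro i
      rw [hx'def, tsir_smul _ (hlampos (i:ℕ))]
      calc (1/(2 * tsir (k+1) (f (i:ℕ)).1)) * tsir k (f (i:ℕ)).1
          ≤ (1/(2 * tsir (k+1) (f (i:ℕ)).1)) * 1 :=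
            mul_le_mul_of_nonneg_left (hfspec (i:ℕ)).2.2.1 (hlampos (i:ℕ)).le
        _ = 1/(2 * tsir (k+1) (f (i:ℕ)).1) := mul_one _
    have hxk' : ∀ i : Fin n, tsir k (x' i) ≤ 1/(2*(n:ℝ)) :=
      fun i => le_trans (hxk i) (hlamle' (i:ℕ))
    refine ⟨x', fun i => (f (i:ℕ)).2.1, fun i => (f (i:ℕ)).2.2, hxval, ?_, ?_, ?_, ?_, ?_, ?_⟩
    · intro i
      rw [hxsupp i]
      exact (hfspec (i:ℕ)).2.1
    · intro i p hp
      rw [hxsupp i] at hp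
      exact (hfspec (i:ℕ)).1 p hp
    · intro i
      have h := hge (i:ℕ)
      exact ⟨le_trans (le_max_left _ _) h, le_trans (le_max_right _ _) h⟩
    · intro i j hij
      exact hchain (i:ℕ) (j:ℕ) hij
    · -- upper bound : tsir (k+1) (∑ x') ≤ 1
      apply max_le
      · calc tsir k (∑ i, x' i) ≤ ∑ i, tsir k (x' i) := tsir_sum_le k _ _
          _ ≤ ∑ _i : Fin n, 1/(2*(n:ℝ)) := Finset.sum_le_sum fun i _ => hxk' i
          _ = (n:ℝ) * (1/(2*(n:ℝ))) := by
              rw [Finset.sum_const, Finset.card_univ, Fintype.card_fin, nsmul_eq_mul]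
          _ ≤ 1 := by
              rw [mul_one_div]
              rw [div_le_one (by linarith)]
              linarith
      · apply Real.sSup_le _ (by norm_num)
        rintro r ⟨m, Es, hadm, rfl⟩
        have hkey : ∑ i : Fin m, tsir k (restr (Es i) (∑ j, x' j)) ≤ 3/2 := by
          have hsplit : ∀ i : Fin m, tsir k (restr (Es i) (∑ j, x' j))
              ≤ ∑ j : Fin n, tsir k (restr (Es i) (x' j)) := by
            intro i
            rw [restr_sum]
            exact tsir_sum_le k _ _
          refine le_trans (Finset.sum_le_sum fun i _ => hsplit i) ?_
          rw [Finset.sum_comm]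
          -- now bound ∑ j ∑ i
          set J : Finset (Fin n) :=
            Finset.univ.filter (fun j => ∃ i : Fin m, restr (Es i) (x' j) ≠ 0) with hJdef
          by_cases hJ : J.Nonempty
          · set j₁ := J.min' hJ with hj₁def
            have hj₁mem : j₁ ∈ J := J.min'_mem hJ
            obtain ⟨i₁, hi₁⟩ := (Finset.mem_filter.1 hj₁mem).2
            obtain ⟨p₁, hp₁⟩ := Finsupp.support_nonempty_iff.2 hi₁
            rw [support_restr, Finset.mem_filter] at hp₁
            have hmle : m ≤ (f (j₁:ℕ)).2.2 := by
              have ha1 := hadm.2.2.1 i₁ p₁ hp₁.2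
              have ha2 := ((hfspec (j₁:ℕ)).1 p₁ ((hxsupp j₁) ▸ hp₁.1)).2
              omega
            have hTj₁ : ∑ i : Fin m, tsir k (restr (Es i) (x' j₁)) ≤ 1 := by
              have hle := tsir_succ_ge (k := k) hadm (x' j₁)
              rw [hxval j₁] at hle
              linarith
            have hTother : ∀ j ∈ Finset.univ.erase j₁,
                ∑ i : Fin m, tsir k (restr (Es i) (x' j)) ≤ 1/(2*(n:ℝ)) := by
              intro j hj
              have hjne : j ≠ j₁ := (Finset.mem_erase.1 hj).1
              by_cases hjJ : j ∈ J
              · have hlt : j₁ < j := lt_of_le_of_ne (J.min'_le j hjJ) (Ne.symm hjne)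
                have hltn : (j₁:ℕ) < (j:ℕ) := hlt
                have hj' : ((j:ℕ) - 1) + 1 = (j:ℕ) := by omega
                have hNfj : Nf (j:ℕ) = 4*n*((f ((j:ℕ)-1)).2.2+1) := by
                  conv_lhs => rw [← hj']
                  rw [hNs]
                have hbmono : (f (j₁:ℕ)).2.2 ≤ (f ((j:ℕ)-1)).2.2 := by
                  rcases Nat.lt_or_ge (j₁:ℕ) ((j:ℕ)-1) with h | h
                  · have c1 := hchain (j₁:ℕ) ((j:ℕ)-1) h
                    have c2 := hab ((j:ℕ)-1)
                    omega
                  · have : (j₁:ℕ) = (j:ℕ)-1 := by omega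
                    rw [this]
                -- per-term bound
                have hterm : ∀ i : Fin m, tsir k (restr (Es i) (x' j))
                    ≤ 2/(Nf (j:ℕ) : ℝ) :=
                  fun i => le_trans (tsir_restr_le k _ _)
                    (le_trans (hxk j) (hlamle (j:ℕ)))
                have hsum : ∑ i : Fin m, tsir k (restr (Es i) (x' j))
                    ≤ (m:ℝ) * (2/(Nf (j:ℕ) : ℝ)) := by
                  calc ∑ i : Fin m, tsir k (restr (Es i) (x' j))
                      ≤ ∑ _i : Fin m, 2/(Nf (j:ℕ) : ℝ) :=
                        Finset.sum_le_sum fun i _ => hterm i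
                    _ = (m:ℝ) * (2/(Nf (j:ℕ) : ℝ)) := by
                        rw [Finset.sum_const, Finset.card_univ, Fintype.card_fin, nsmul_eq_mul]
                refine le_trans hsum ?_
                -- m ≤ B+1, Nf j = 4n(B+1)
                set B : ℕ := (f ((j:ℕ)-1)).2.2 with hBdef
                have hmB : (m:ℝ) ≤ (B:ℝ) + 1 := by
                  have : m ≤ B + 1 := by omega
                  exact_mod_cast this
                have hNfcast : (Nf (j:ℕ) : ℝ) = 4*(n:ℝ)*((B:ℝ)+1) := by
                  rw [hNfj]
                  push_cast
                  ring
                rw [hNfcast]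
                have hBpos : (0:ℝ) < (B:ℝ) + 1 := by positivity
                calc (m:ℝ) * (2 / (4 * (n:ℝ) * ((B:ℝ)+1)))
                    ≤ ((B:ℝ)+1) * (2 / (4 * (n:ℝ) * ((B:ℝ)+1))) :=
                      mul_le_mul_of_nonneg_right hmB (by positivity)
                  _ = 1 / (2 * (n:ℝ)) := by
                      field_simp
                      ring
              · -- j ∉ J : all restrictions vanish
                have hz : ∀ i : Fin m, restr (Es i) (x' j) = 0 := by
                  by_contra hc
                  push_neg at hc
                  obtain ⟨i, hi⟩ := hc
                  exact hjJ (Finset.mem_filter.2 ⟨Finset.mem_univ _, ⟨i, hi⟩⟩)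
                calc ∑ i : Fin m, tsir k (restr (Es i) (x' j))
                    = ∑ _i : Fin m, (0:ℝ) := by
                      refine Finset.sum_congr rfl fun i _ => ?_
                      rw [hz i, tsir_zero]
                  _ = 0 := Finset.sum_const_zero
                  _ ≤ 1/(2*(n:ℝ)) := by positivity
            calc ∑ j : Fin n, ∑ i : Fin m, tsir k (restr (Es i) (x' j))
                = (∑ i : Fin m, tsir k (restr (Es i) (x' j₁)))
                  + ∑ j ∈ Finset.univ.erase j₁, ∑ i : Fin m, tsir k (restr (Es i) (x' j)) :=
                  (Finset.add_sum_erase _ _ (Finset.mem_univ j₁)).symm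
              _ ≤ 1 + ∑ _j ∈ Finset.univ.erase j₁, 1/(2*(n:ℝ)) :=
                  add_le_add hTj₁ (Finset.sum_le_sum hTother)
              _ = 1 + ((Finset.univ.erase j₁).card : ℝ) * (1/(2*(n:ℝ))) := by
                  rw [Finset.sum_const, nsmul_eq_mul]
              _ ≤ 1 + (n:ℝ) * (1/(2*(n:ℝ))) := by
                  have hcard : ((Finset.univ.erase j₁).card : ℝ) ≤ (n:ℝ) := by
                    have := Finset.card_erase_le (s := (Finset.univ : Finset (Fin n))) (a := j₁)
                    have hcu : (Finset.univ : Finset (Fin n)).card = n := by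
                      rw [Finset.card_univ, Fintype.card_fin]
                    have : (Finset.univ.erase j₁).card ≤ n := by omega
                    exact_mod_cast this
                  have hpos : (0:ℝ) ≤ 1/(2*(n:ℝ)) := by positivity
                  nlinarith
              _ ≤ 3/2 := by
                  have hhalf : (n:ℝ) * (1/(2*(n:ℝ))) = 1/2 := by
                    field_simp
                  rw [hhalf]
                  norm_num
          · -- J empty : everything vanishes
            rw [Finset.not_nonempty_iff_eq_empty] at hJ
            have hz : ∀ j : Fin n, ∀ i : Fin m, restr (Es i) (x' j) = 0 := by
              intro j i
              by_contra hc
              have : j ∈ J := Finset.mem_filter.2 ⟨Finset.mem_univ _, ⟨i, hc⟩⟩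
              rw [hJ] at this
              exact absurd this (Finset.notMem_empty _)
            calc ∑ j : Fin n, ∑ i : Fin m, tsir k (restr (Es i) (x' j))
                = ∑ _j : Fin n, ∑ _i : Fin m, (0:ℝ) := by
                  refine Finset.sum_congr rfl fun j _ => Finset.sum_congr rfl fun i _ => ?_
                  rw [hz j i, tsir_zero]
              _ = 0 := by simp
              _ ≤ 3/2 := by norm_num
        nlinarith [hkey, Finset.sum_nonneg
          (fun (i : Fin m) (_ : i ∈ Finset.univ) => tsir_nonneg k (restr (Es i) (∑ j, x' j)))]
    · -- lower bound : n/4 ≤ tsir (k+2) (∑ x')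
      apply blocks_lower npos
      · intro i
        rw [hxsupp i]
        exact (hfspec (i:ℕ)).2.1
      · intro i p hp
        rw [hxsupp i] at hp
        have hb := ((hfspec (i:ℕ)).1 p hp).1
        have := hge (i:ℕ)
        omega
      · intro i j hij p hp q hq
        rw [hxsupp i] at hp
        rw [hxsupp j] at hq
        have hb1 := ((hfspec (i:ℕ)).1 p hp).2
        have hb2 := ((hfspec (j:ℕ)).1 q hq).1
        have hc := hchain (i:ℕ) (j:ℕ) hij
        omega
      · exact hxval

/-- for every `k ∈ ℕ` and `n ≥ 1` there are `x_1, …, x_n ∈ c00` with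
`‖x_i‖_k = 1/2` for all `i`, `‖Σ x_i‖_k ≤ 1` and `‖Σ x_i‖_{k+1} ≥ n/4`. -/
theorem tsir_iterate_gap (k n : ℕ) (hn : 1 ≤ n) :
    ∃ x : Fin n → (ℕ →₀ ℝ),
      (∀ i, tsir k (x i) = 1 / 2) ∧
      tsir k (∑ i, x i) ≤ 1 ∧
      (n : ℝ) / 4 ≤ tsir (k + 1) (∑ i, x i) := by
  obtain ⟨x, lo, hi, hval, _, _, _, _, hupper, hlower⟩ := main_statement k n hn 0
  exact ⟨x, hval, hupper, hlower⟩
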